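/- Let p < q be reals. For s ∈ ℝ define φ_s(t) = (q − t) e^{πs} + (t − p) e^{−πs}, D_s(t) = φ_s(t)/(q − p), and m_s(t) = ((q − t) p e^{πs} + (t − p) q e^{−πs})/φ_s(t) whenever φ_s(t) ≠ 0. Then for all s ∈ ℝ and all reals x, y, z with φ_s(x) ≠ 0, φ_{−s}(y) ≠ 0, φ_{−s}(z) ≠ 0, y ≠ z, and m_{−s}(y) ≠ m_{−s}(z): (y − m_s(x)) (m_s(x) − z) / (y − z) = D_s(x)^{−2} · (m_{−s}(y) − x) (x − m_{−s}(z)) / (m_{−s}(y) − m_{−s}(z)). -/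

import Mathlib

/-- Conformal factor numerator of the modular flow of the interval `(p, q)`:
`φ_s(t) = (q - t) e^{πs} + (t - p) e^{-πs}`. -/
noncomputable def phiFlow (p q s t : ℝ) : ℝ :=
  (q - t) * Real.exp (Real.pi * s) + (t - p) * Real.exp (-(Real.pi * s))

/-- Conformal factor of the modular flow: `D_s(t) = φ_s(t)/(q - p)`. -/
noncomputable def DFlow (p q s t : ℝ) : ℝ := phiFlow p q s t / (q - p)

/-- Point transformation implemented by the modular flow of the interval `(p, q)`:
`m_s(t) = ((q - t) p e^{πs} + (t - p) q e^{-πs}) / φ_s(t)`. -/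
noncomputable def mFlow (p q s t : ℝ) : ℝ :=
  ((q - t) * p * Real.exp (Real.pi * s) + (t - p) * q * Real.exp (-(Real.pi * s))) /
    phiFlow p q s t

set_option maxHeartbeats 1000000 in
/-- Cross-ratio covariance of the HKLL smearing kernel under the modular flow (key algebraic
step of Lemma 16):
`(y - m_s(x))(m_s(x) - z)/(y - z) = D_s(x)^{-2} (m_{-s}(y) - x)(x - m_{-s}(z))/(m_{-s}(y) - m_{-s}(z))`. -/
theorem hkll_kernel_cross_ratio_covariance
    (p q s x y z : ℝ) (hpq : p < q)
    (hx : phiFlow p q s x ≠ 0) (hy : phiFlow p q (-s) y ≠ 0) (hz : phiFlow p q (-s) z ≠ 0)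
    (hyz : y ≠ z) (hmyz : mFlow p q (-s) y ≠ mFlow p q (-s) z) :
    (y - mFlow p q s x) * (mFlow p q s x - z) / (y - z) =
      (DFlow p q s x) ^ (-2 : ℤ) *
        ((mFlow p q (-s) y - x) * (x - mFlow p q (-s) z) /
          (mFlow p q (-s) y - mFlow p q (-s) z)) := by
  have hqp : q - p ≠ 0 := sub_ne_zero.2 hpq.ne'
  set a := Real.exp (Real.pi * s) with hadef
  have ha : a ≠ 0 := Real.exp_ne_zero _
  have hyz' : y - z ≠ 0 := sub_ne_zero.2 hyz
  simp only [mFlow, DFlow, phiFlow, mul_neg, neg_neg, Real.exp_neg, ← hadef] at *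
  have hx2 : (q - x) * a * a + (x - p) ≠ 0 := by
    have e : (q - x) * a * a + (x - p) = a * ((q - x) * a + (x - p) * a⁻¹) := by
      field_simp
    rw [e]; exact mul_ne_zero ha hx
  have hy2 : q - y + (y - p) * a * a ≠ 0 := by
    have e : q - y + (y - p) * a * a = a * ((q - y) * a⁻¹ + (y - p) * a) := by
      field_simp
    rw [e]; exact mul_ne_zero ha hy
  have hz2 : q - z + (z - p) * a * a ≠ 0 := by
    have e : q - z + (z - p) * a * a = a * ((q - z) * a⁻¹ + (z - p) * a) := by
      field_simp
    rw [e]; exact mul_ne_zero ha hz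
  have ey : ((q - y) * p * a⁻¹ + (y - p) * q * a) / ((q - y) * a⁻¹ + (y - p) * a)
      = ((q - y) * p + (y - p) * q * a * a) / (q - y + (y - p) * a * a) := by
    rw [div_eq_div_iff hy hy2]; field_simp
  have ez : ((q - z) * p * a⁻¹ + (z - p) * q * a) / ((q - z) * a⁻¹ + (z - p) * a)
      = ((q - z) * p + (z - p) * q * a * a) / (q - z + (z - p) * a * a) := by
    rw [div_eq_div_iff hz hz2]; field_simp
  have ex : ((q - x) * p * a + (x - p) * q * a⁻¹) / ((q - x) * a + (x - p) * a⁻¹)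
      = ((q - x) * p * a * a + (x - p) * q) / ((q - x) * a * a + (x - p)) := by
    rw [div_eq_div_iff hx hx2]; field_simp
  rw [ey, ez] at hmyz
  rw [ex, ey, ez]
  have hmyz2 : ((q - y) * p + (y - p) * q * a * a) * (q - z + (z - p) * a * a) -
      (q - y + (y - p) * a * a) * ((q - z) * p + (z - p) * q * a * a) ≠ 0 := by
    intro h; apply hmyz
    rw [div_eq_div_iff hy2 hz2]; linear_combination h
  have eDx : ((q - x) * a + (x - p) * a⁻¹) / (q - p)
      = (((q - x) * a * a + (x - p)) / a) / (q - p) := by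
    field_simp
  rw [eDx]
  have f1 : y - ((q - x) * p * a * a + (x - p) * q) / ((q - x) * a * a + (x - p))
      = (((q - y) * p + (y - p) * q * a * a) - x * (q - y + (y - p) * a * a)) /
        ((q - x) * a * a + (x - p)) := by
    rw [eq_div_iff hx2, sub_mul, div_mul_cancel₀ _ hx2]
    ring
  have f2 : ((q - x) * p * a * a + (x - p) * q) / ((q - x) * a * a + (x - p)) - z
      = (x * (q - z + (z - p) * a * a) - ((q - z) * p + (z - p) * q * a * a)) /
        ((q - x) * a * a + (x - p)) := by
    rw [eq_div_iff hx2, sub_mul, div_mul_cancel₀ _ hx2]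
    ring
  have f3 : ((q - y) * p + (y - p) * q * a * a) / (q - y + (y - p) * a * a) - x
      = (((q - y) * p + (y - p) * q * a * a) - x * (q - y + (y - p) * a * a)) /
        (q - y + (y - p) * a * a) := by
    rw [eq_div_iff hy2, sub_mul, div_mul_cancel₀ _ hy2]
  have f4 : x - ((q - z) * p + (z - p) * q * a * a) / (q - z + (z - p) * a * a)
      = (x * (q - z + (z - p) * a * a) - ((q - z) * p + (z - p) * q * a * a)) /
        (q - z + (z - p) * a * a) := by
    rw [eq_div_iff hz2, sub_mul, div_mul_cancel₀ _ hz2]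
  have f5 : ((q - y) * p + (y - p) * q * a * a) / (q - y + (y - p) * a * a) -
      ((q - z) * p + (z - p) * q * a * a) / (q - z + (z - p) * a * a)
      = (a * a * (q - p) ^ 2 * (y - z)) /
        ((q - y + (y - p) * a * a) * (q - z + (z - p) * a * a)) := by
    rw [div_sub_div _ _ hy2 hz2]
    rw [div_eq_div_iff (mul_ne_zero hy2 hz2) (mul_ne_zero hy2 hz2)]
    ring
  rw [f1, f2, f3, f4, f5]
  rw [zpow_neg, zpow_two]
  have h1 : a ^ 2 * (q - x) + (x - p) ≠ 0 := by convert hx2 using 1; ring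
  have h2 : q - y + (y - p) * a ^ 2 ≠ 0 := by convert hy2 using 1; ring
  have h3 : q - z + a ^ 2 * (z - p) ≠ 0 := by convert hz2 using 1; ring
  field_simp
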